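/- Let n ≥ 1, let ⟨z,w⟩_{n,1} = z₁w̄₁ + ⋯ + zₙw̄ₙ − z_{n+1}w̄_{n+1} on ℂ^{n+1}, let 𝔹ⁿ be the open unit ball of ℂⁿ, and for a nonzero vector z ∈ ℂ^{n+1} let [z] ∈ ℙⁿ denote the complex line it spans. The map from 𝔹ⁿ × ℂⁿ to ℙⁿ × ℙⁿ sending (u, v) to the pair ([(u₁,…,uₙ,1)], [(v̄₁,…,v̄ₙ, 1 + ū₁v̄₁ + ⋯ + ūₙv̄ₙ)]) is a bijection onto the set W₁,₁ = {([z],[w]) ∈ ℙⁿ × ℙⁿ : ⟨z,w⟩_{n,1} ≠ 0 and ⟨z,z⟩_{n,1} < 0}. -/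

import Mathlib

/-- The hermitian form `⟨z,w⟩_{n,1} = z₁w̄₁ + ⋯ + zₙw̄ₙ − z_{n+1}w̄_{n+1}` on `ℂ^{n+1}`. -/
noncomputable def hermForm (n : ℕ) (z w : Fin (n + 1) → ℂ) : ℂ :=
  (∑ i : Fin n, z i.castSucc * starRingEnd ℂ (w i.castSucc)) -
    z (Fin.last n) * starRingEnd ℂ (w (Fin.last n))

/-- The vector `(u₁, …, uₙ, 1)`. -/
def vecZ (n : ℕ) (u : Fin n → ℂ) : Fin (n + 1) → ℂ := Fin.snoc u 1

/-- The vector `(v̄₁, …, v̄ₙ, 1 + ū₁v̄₁ + ⋯ + ūₙv̄ₙ)`. -/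
noncomputable def vecW (n : ℕ) (u v : Fin n → ℂ) : Fin (n + 1) → ℂ :=
  Fin.snoc (fun i => starRingEnd ℂ (v i))
    (1 + ∑ i : Fin n, starRingEnd ℂ (u i) * starRingEnd ℂ (v i))

lemma vecZ_ne_zero (n : ℕ) (u : Fin n → ℂ) : vecZ n u ≠ 0 := by
  intro h
  simpa [vecZ] using congrFun h (Fin.last n)

lemma vecW_ne_zero (n : ℕ) (u v : Fin n → ℂ) : vecW n u v ≠ 0 := by
  intro h
  by_cases hv : v = 0
  · have := congrFun h (Fin.last n)
    simp [vecW, hv] at this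
  · obtain ⟨i, hi⟩ := Function.ne_iff.mp hv
    have := congrFun h i.castSucc
    simp [vecW] at this
    exact hi (by simpa using this)

/-- The map `𝔹ⁿ × ℂⁿ → ℙⁿ × ℙⁿ`,
`(u,v) ↦ ([(u,1)], [(v̄, 1 + ū·v̄)])`. -/
noncomputable def F₁₁ (n : ℕ) :
    EuclideanSpace ℂ (Fin n) × EuclideanSpace ℂ (Fin n) →
      Projectivization ℂ (Fin (n + 1) → ℂ) × Projectivization ℂ (Fin (n + 1) → ℂ) :=
  fun p =>
    (Projectivization.mk ℂ (vecZ n p.1) (vecZ_ne_zero n p.1),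
     Projectivization.mk ℂ (vecW n p.1 p.2) (vecW_ne_zero n p.1 p.2))

/-- The domain `W₁,₁ = {([z],[w]) : ⟨z,w⟩_{n,1} ≠ 0 and ⟨z,z⟩_{n,1} < 0}` in `ℙⁿ × ℙⁿ`. -/
def W₁₁ (n : ℕ) :
    Set (Projectivization ℂ (Fin (n + 1) → ℂ) × Projectivization ℂ (Fin (n + 1) → ℂ)) :=
  {P | ∃ (z w : Fin (n + 1) → ℂ) (hz : z ≠ 0) (hw : w ≠ 0),
    P = (Projectivization.mk ℂ z hz, Projectivization.mk ℂ w hw) ∧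
    hermForm n z w ≠ 0 ∧ (hermForm n z z).re < 0}

lemma hermZZ (n : ℕ) (u : Fin n → ℂ) :
    hermForm n (vecZ n u) (vecZ n u) = (↑(∑ i, Complex.normSq (u i)) : ℂ) - 1 := by
  simp [hermForm, vecZ, Complex.mul_conj]

lemma hermZW (n : ℕ) (u v : Fin n → ℂ) :
    hermForm n (vecZ n u) (vecW n u v) = -1 := by
  simp [hermForm, vecZ, vecW, map_add, map_sum, map_mul, mul_comm]

lemma herm_smul_left (n : ℕ) (a : ℂ) (z w : Fin (n + 1) → ℂ) :
    hermForm n (a • z) w = a * hermForm n z w := by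
  simp [hermForm, Finset.mul_sum, mul_assoc, mul_sub]

lemma herm_smul_right (n : ℕ) (a : ℂ) (z w : Fin (n + 1) → ℂ) :
    hermForm n z (a • w) = starRingEnd ℂ a * hermForm n z w := by
  simp [hermForm, Finset.mul_sum, map_mul, mul_assoc, mul_left_comm, mul_sub]

lemma ball_iff (n : ℕ) (u : EuclideanSpace ℂ (Fin n)) :
    u ∈ Metric.ball (0 : EuclideanSpace ℂ (Fin n)) 1 ↔ ∑ i, Complex.normSq (u i) < 1 := by
  rw [mem_ball_zero_iff, EuclideanSpace.norm_eq, show (1:ℝ) = Real.sqrt 1 by simp,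
    Real.sqrt_lt_sqrt_iff (by positivity)]
  simp [Complex.sq_norm]

/-- Example 6.3: `(u,v) ↦ ([(u,1)], [(v̄, 1 + ū·v̄)])` is a bijection from `𝔹ⁿ × ℂⁿ`
onto `W₁,₁`. -/
theorem stmt_12 (n : ℕ) (hn : 1 ≤ n) :
    Set.BijOn (F₁₁ n)
      (Metric.ball (0 : EuclideanSpace ℂ (Fin n)) 1 ×ˢ
        (Set.univ : Set (EuclideanSpace ℂ (Fin n))))
      (W₁₁ n) := by
  refine ⟨?_, ?_, ?_⟩
  · -- MapsTo
    rintro ⟨u, v⟩ ⟨hu, -⟩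
    refine ⟨vecZ n u, vecW n u v, vecZ_ne_zero n u, vecW_ne_zero n u v, rfl, ?_, ?_⟩
    · rw [hermZW]; norm_num
    · rw [hermZZ]
      have := (ball_iff n u).1 hu
      simp only [Complex.sub_re, Complex.ofReal_re, Complex.one_re]
      linarith
  · -- InjOn
    rintro ⟨u, v⟩ - ⟨u', v'⟩ - h
    have h1 := congrArg Prod.fst h
    have h2 := congrArg Prod.snd h
    simp only [F₁₁] at h1 h2
    rw [Projectivization.mk_eq_mk_iff'] at h1 h2
    obtain ⟨a, ha⟩ := h1
    have halast : a = 1 := by simpa [vecZ] using congrFun ha (Fin.last n)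
    subst halast
    have hu : u = u' := by
      ext i
      simpa [vecZ] using (congrFun ha i.castSucc).symm
    subst hu
    obtain ⟨b, hb⟩ := h2
    have hbc : ∀ i : Fin n, b * starRingEnd ℂ (v' i) = starRingEnd ℂ (v i) := fun i => by
      simpa [vecW] using congrFun hb i.castSucc
    have hbl : b * (1 + ∑ i, starRingEnd ℂ (u i) * starRingEnd ℂ (v' i))
        = 1 + ∑ i, starRingEnd ℂ (u i) * starRingEnd ℂ (v i) := by
      simpa [vecW] using congrFun hb (Fin.last n)
    have hS : ∑ i, starRingEnd ℂ (u i) * starRingEnd ℂ (v i)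
        = b * ∑ i, starRingEnd ℂ (u i) * starRingEnd ℂ (v' i) := by
      rw [Finset.mul_sum]
      exact Finset.sum_congr rfl fun i _ => by rw [← hbc i]; ring
    have hb1 : b = 1 := by
      have h' := hbl
      rw [hS] at h'
      linear_combination h'
    subst hb1
    have hv : v = v' := by
      ext i
      exact (starRingEnd ℂ).injective (by simpa using (hbc i).symm)
    rw [hv]
  · -- SurjOn
    rintro ⟨Pz, Pw⟩ ⟨z, w, hz, hw, hP, hne, hlt⟩
    have hPz : Pz = Projectivization.mk ℂ z hz := (Prod.ext_iff.mp hP).1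
    have hPw : Pw = Projectivization.mk ℂ w hw := (Prod.ext_iff.mp hP).2
    have hzl : z (Fin.last n) ≠ 0 := by
      intro h0
      have : hermForm n z z = (↑(∑ i : Fin n, Complex.normSq (z i.castSucc)) : ℂ) := by
        simp [hermForm, h0, Complex.mul_conj]
      rw [this] at hlt
      simp only [Complex.ofReal_re] at hlt
      exact absurd hlt (not_lt.mpr (Finset.sum_nonneg fun i _ => Complex.normSq_nonneg _))
    set a : ℂ := (z (Fin.last n))⁻¹ with ha
    have ha0 : a ≠ 0 := inv_ne_zero hzl
    set u : EuclideanSpace ℂ (Fin n) := WithLp.toLp 2 (fun i : Fin n => a * z i.castSucc) with hu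
    have hvz : a • z = vecZ n u := by
      funext j
      refine Fin.lastCases ?_ (fun i => ?_) j
      · simp [vecZ, ha, inv_mul_cancel₀ hzl]
      · simp [vecZ, hu]
    have hmkz : Projectivization.mk ℂ (vecZ n u) (vecZ_ne_zero n u)
        = Projectivization.mk ℂ z hz := by
      rw [Projectivization.mk_eq_mk_iff']
      exact ⟨a, hvz⟩
    have huball : u ∈ Metric.ball (0 : EuclideanSpace ℂ (Fin n)) 1 := by
      rw [ball_iff]
      have h1 : (hermForm n (vecZ n u) (vecZ n u)).re < 0 := by
        rw [← hvz, herm_smul_left, herm_smul_right, ← mul_assoc, Complex.mul_conj,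
          Complex.re_ofReal_mul]
        exact mul_neg_of_pos_of_neg (Complex.normSq_pos.mpr ha0) hlt
      rw [hermZZ] at h1
      simp only [Complex.sub_re, Complex.ofReal_re, Complex.one_re] at h1
      linarith
    set c : ℂ := hermForm n (vecZ n u) w with hcdef
    have hc : c ≠ 0 := by
      rw [hcdef, ← hvz, herm_smul_left]
      exact mul_ne_zero ha0 hne
    have hcc : starRingEnd ℂ c ≠ 0 := by simpa using hc
    set lam : ℂ := -(starRingEnd ℂ c)⁻¹ with hlam
    set v : EuclideanSpace ℂ (Fin n) := WithLp.toLp 2 (fun i : Fin n => starRingEnd ℂ (lam * w i.castSucc)) with hv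
    have hcform : starRingEnd ℂ c
        = (∑ i, starRingEnd ℂ (u i) * w i.castSucc) - w (Fin.last n) := by
      rw [hcdef]
      simp [hermForm, vecZ, map_sum, map_mul, map_sub]
    have key : lam * w (Fin.last n)
        = 1 + lam * ∑ i, starRingEnd ℂ (u i) * w i.castSucc := by
      have h2 : lam * (-(starRingEnd ℂ c)) = 1 := by
        rw [hlam]
        field_simp
      rw [hcform] at h2
      linear_combination h2
    have hvw : lam • w = vecW n u v := by
      funext j
      refine Fin.lastCases ?_ (fun i => ?_) j
      · have : ∀ i : Fin n, starRingEnd ℂ (u i) * starRingEnd ℂ (v i)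
            = starRingEnd ℂ (u i) * (lam * w i.castSucc) := fun i => by
          simp [hv]
        simp only [Pi.smul_apply, smul_eq_mul, vecW, Fin.snoc_last]
        rw [Finset.sum_congr rfl fun i _ => this i]
        rw [key, Finset.mul_sum]
        congr 1
        exact Finset.sum_congr rfl fun i _ => by ring
      · simp [vecW, hv]
    have hmkw : Projectivization.mk ℂ (vecW n u v) (vecW_ne_zero n u v)
        = Projectivization.mk ℂ w hw := by
      rw [Projectivization.mk_eq_mk_iff']
      exact ⟨lam, hvw⟩
    refine ⟨(u, v), ⟨huball, trivial⟩, ?_⟩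
    rw [hP]
    exact Prod.ext hmkz hmkw
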